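/- Let L > 0 and x ∈ ℝ^n, and suppose the descent condition holds at x with constant L, i.e. f(T_L(x)) ≤ f(x) + ⟨∇f(x), T_L(x) − x⟩ + (L/2)‖T_L(x) − x‖². Then for every y ∈ ℝ^n the composite objective is globally lower bounded as F(y) ≥ F(T_L(x)) + (1/(2L))‖g_L(x)‖² + ⟨g_L(x), y − x⟩, where g_L(x) = L(x − T_L(x)) is the composite gradient mapping. -/

import Mathlib

open Set
open scoped RealInnerProductSpace

/-- `Euc n` is the Euclidean space `ℝ^n`. -/
abbrev Euc (n : ℕ) := EuclideanSpace ℝ (Fin n)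

/-- First-order condition for a convex differentiable function. -/
lemma grad_convex_ineq {n : ℕ} {f : Euc n → ℝ}
    (hf : ConvexOn ℝ Set.univ f) {x g : Euc n} (hg : HasGradientAt f g x)
    (y : Euc n) : f x + ⟪g, y - x⟫ ≤ f y := by
  set φ : ℝ → ℝ := fun t => f (x + t • (y - x)) with hφ
  have hφconv : ConvexOn ℝ Set.univ φ := by
    have := hf.comp_affineMap (AffineMap.lineMap x y)
    simp only [Set.preimage_univ] at this
    have heq : φ = f ∘ AffineMap.lineMap x y := by
      funext t
      simp [hφ, AffineMap.lineMap_apply_module]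
      ring_nf
      congr 1
      module
    rw [heq]
    exact this
  have h1 : HasDerivAt (fun t : ℝ => x + t • (y - x)) (y - x) 0 := by
    simpa using ((hasDerivAt_id (0:ℝ)).smul_const (y - x)).const_add x
  have h2 : HasDerivAt φ ⟪g, y - x⟫ 0 := by
    have hf2 := hasGradientAt_iff_hasFDerivAt.1 hg
    have hf2' : HasFDerivAt f (InnerProductSpace.toDual ℝ (Euc n) g)
        ((fun t : ℝ => x + t • (y - x)) 0) := by simpa using hf2
    have := hf2'.comp_hasDerivAt 0 h1
    rw [InnerProductSpace.toDual_apply_apply] at this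
    exact this
  have h3 := hφconv.le_slope_of_hasDerivAt (Set.mem_univ 0) (Set.mem_univ 1)
    zero_lt_one h2
  have h4 : slope φ 0 1 = f y - f x := by
    simp [slope_def_field, hφ]
  rw [h4] at h3
  linarith

theorem composite_gradient_lower_bound {n : ℕ}
    (f Ψ F : Euc n → ℝ) (f' : Euc n → Euc n)
    (hf : ConvexOn ℝ Set.univ f)
    (hf' : ∀ z, HasGradientAt f (f' z) z)
    (hΨ : ConvexOn ℝ Set.univ Ψ)
    (hΨlsc : LowerSemicontinuous Ψ)
    (hF : ∀ z, F z = f z + Ψ z)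
    (L : ℝ) (hL : 0 < L) (x T : Euc n)
    (hT : ∀ y, f x + ⟪f' x, T - x⟫ + L / 2 * ‖T - x‖ ^ 2 + Ψ T
        ≤ f x + ⟪f' x, y - x⟫ + L / 2 * ‖y - x‖ ^ 2 + Ψ y)
    (hdesc : f T ≤ f x + ⟪f' x, T - x⟫ + L / 2 * ‖T - x‖ ^ 2) :
    ∀ y, F y ≥ F T + 1 / (2 * L) * ‖L • (x - T)‖ ^ 2 + ⟪L • (x - T), y - x⟫ := by
  intro y
  -- subgradient inequality for Ψ at T
  have hsub : Ψ T - Ψ y ≤ ⟪f' x, y - T⟫ + L * ⟪T - x, y - T⟫ := by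
    have key : ∀ t : ℝ, 0 < t → t ≤ 1 →
        Ψ T - Ψ y ≤ ⟪f' x, y - T⟫ + L * ⟪T - x, y - T⟫ + L / 2 * t * ‖y - T‖ ^ 2 := by
      intro t ht ht1
      set z : Euc n := T + t • (y - T) with hz
      have hzc : z = (1 - t) • T + t • y := by rw [hz]; module
      have hΨz : Ψ z ≤ (1 - t) * Ψ T + t * Ψ y := by
        rw [hzc]
        exact hΨ.2 (Set.mem_univ T) (Set.mem_univ y) (by linarith) ht.le (by ring)
      have hzx : z - x = (T - x) + t • (y - T) := by rw [hz]; abel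
      have hnorm : ‖z - x‖ ^ 2 = ‖T - x‖ ^ 2 + 2 * (t * ⟪T - x, y - T⟫)
          + t ^ 2 * ‖y - T‖ ^ 2 := by
        rw [hzx, norm_add_sq_real, real_inner_smul_right, norm_smul]
        simp [mul_pow, abs_of_pos ht]
        try ring
      have hinner : ⟪f' x, z - x⟫ = ⟪f' x, T - x⟫ + t * ⟪f' x, y - T⟫ := by
        rw [hzx, inner_add_right, real_inner_smul_right]
      have := hT z
      rw [hnorm, hinner] at this
      have h5 : t * (Ψ T - Ψ y) ≤ t * (⟪f' x, y - T⟫ + L * ⟪T - x, y - T⟫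
          + L / 2 * t * ‖y - T‖ ^ 2) := by nlinarith [this, hΨz]
      exact le_of_mul_le_mul_left (by linarith [h5]) ht
    have hK : (0:ℝ) ≤ ‖y - T‖ ^ 2 := sq_nonneg _
    refine le_of_forall_pos_le_add fun ε hε => ?_
    set t : ℝ := min 1 (ε / (L / 2 * ‖y - T‖ ^ 2 + 1)) with htdef
    have hden : (0:ℝ) < L / 2 * ‖y - T‖ ^ 2 + 1 := by positivity
    have ht0 : 0 < t := lt_min one_pos (by positivity)
    have ht1 : t ≤ 1 := min_le_left _ _
    have h6 := key t ht0 ht1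
    have h7 : L / 2 * t * ‖y - T‖ ^ 2 ≤ ε := by
      have h8 : t ≤ ε / (L / 2 * ‖y - T‖ ^ 2 + 1) := min_le_right _ _
      have h9 : t * (L / 2 * ‖y - T‖ ^ 2 + 1) ≤ ε := by
        rw [← le_div_iff₀ hden] at *
        exact h8
      nlinarith [mul_nonneg ht0.le (mul_nonneg (by positivity : (0:ℝ) ≤ L/2) hK)]
    linarith
  have hconv := grad_convex_ineq hf (hf' x) y
  have hFy := hF y
  have hFT := hF T
  -- inner product algebra
  have halg1 : ⟪L • (x - T), y - x⟫ = L * ⟪x - T, y - x⟫ := real_inner_smul_left _ _ _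
  have halg2 : ‖L • (x - T)‖ ^ 2 = L ^ 2 * ‖x - T‖ ^ 2 := by
    rw [norm_smul]; simp [mul_pow, abs_of_pos hL]
  have halg3 : ⟪T - x, y - T⟫ = - ⟪x - T, y - x⟫ - ‖x - T‖ ^ 2 := by
    have e1 : (T - x : Euc n) = -(x - T) := by abel
    have e2 : (y - T : Euc n) = (y - x) + (x - T) := by abel
    rw [e1, e2, inner_neg_left, inner_add_right, real_inner_self_eq_norm_sq]
    ring
  have halg4 : ⟪f' x, y - T⟫ = ⟪f' x, y - x⟫ - ⟪f' x, T - x⟫ := by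
    rw [← inner_sub_right]; congr 1; abel
  have hLfrac : 1 / (2 * L) * (L ^ 2 * ‖x - T‖ ^ 2) = L / 2 * ‖x - T‖ ^ 2 := by
    field_simp
  have hnTx : ‖T - x‖ = ‖x - T‖ := norm_sub_rev _ _
  rw [hFy, hFT, halg1, halg2, hLfrac]
  rw [halg3, halg4] at hsub
  rw [hnTx] at hdesc
  nlinarith [hsub, hconv, hdesc]
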